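/- The number of parking functions of length n-1 is n^{n-2}. -/

import Mathlib

/-- A parking function of length `m` is a tuple `(a 1, …, a m)` of integers with
`1 ≤ a k ≤ m` such that, when sorted into increasing order `a'_1 ≤ … ≤ a'_m`,
one has `a'_i ≤ i` for all `i`. -/
def IsParkingFunction (m : ℕ) (a : Fin m → ℕ) : Prop :=
  (∀ k : Fin m, 1 ≤ a k ∧ a k ≤ m) ∧
    ∀ i : Fin m, ((List.ofFn a).mergeSort (· ≤ ·))[i.val]! ≤ i.val + 1

theorem PF.countP_ofFn {m : ℕ} (a : Fin m → ℕ) (p : ℕ → Bool) :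
    (List.ofFn a).countP p = (Finset.univ.filter fun k => p (a k)).card := by
  induction m with
  | zero => simp
  | succ m ih =>
      rw [List.ofFn_succ, List.countP_cons, ih (fun k => a k.succ), Fin.card_filter_univ_succ']
      simp [add_comm]

theorem PF.sorted_getElem_le_iff {l : List ℕ} (hl : l.Pairwise (· ≤ ·)) {i v : ℕ}
    (hi : i < l.length) : l[i] ≤ v ↔ i + 1 ≤ l.countP (· ≤ v) := by
  have hmono : ∀ s t (hs : s < l.length) (ht : t < l.length), s ≤ t → l[s] ≤ l[t] := by
    intro s t hs ht hst
    exact hl.rel_get_of_le (a := ⟨s, hs⟩) (b := ⟨t, ht⟩) hst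
  constructor
  · intro h
    have h1 : (l.take (i+1)).countP (· ≤ v) = i + 1 := by
      rw [List.countP_eq_length.mpr, List.length_take]
      · omega
      · intro x hx
        rw [List.mem_take_iff_getElem] at hx
        obtain ⟨t, ht, rfl⟩ := hx
        simp only [decide_eq_true_eq]
        exact le_trans (hmono t i (by omega) hi (by omega)) h
    calc i + 1 = (l.take (i+1)).countP (· ≤ v) := h1.symm
      _ ≤ _ := by
          conv_rhs => rw [← List.take_append_drop (i+1) l]
          rw [List.countP_append]; omega
  · intro h
    by_contra hv
    push_neg at hv
    have h2 : (l.drop i).countP (· ≤ v) = 0 := by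
      rw [List.countP_eq_zero]
      intro x hx
      rw [List.mem_iff_getElem] at hx
      obtain ⟨t, ht, rfl⟩ := hx
      rw [List.getElem_drop]
      simp only [decide_eq_true_eq]
      push_neg
      exact lt_of_lt_of_le hv (hmono i (i+t) hi (by simp at ht; omega) (by omega))
    have h3 : l.countP (· ≤ v) ≤ i := by
      conv_lhs => rw [← List.take_append_drop i l]
      rw [List.countP_append, h2]
      have := List.countP_le_length (p := (· ≤ v)) (l := l.take i)
      rw [List.length_take] at this
      omega
    omega

theorem PF.isPF_iff {m : ℕ} (a : Fin m → ℕ) :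
    IsParkingFunction m a ↔ (∀ k : Fin m, 1 ≤ a k ∧ a k ≤ m) ∧
      ∀ j : ℕ, j ≤ m → j ≤ (Finset.univ.filter fun k => a k ≤ j).card := by
  set l := (List.ofFn a).mergeSort (· ≤ ·) with hldef
  have hlen : l.length = m := by rw [hldef, List.length_mergeSort, List.length_ofFn]
  have hsorted : l.Pairwise (· ≤ ·) := by
    have := List.pairwise_mergeSort (le := fun x y : ℕ => decide (x ≤ y))
      (fun a b c hab hbc => by simp at *; omega) (fun a b => by simp; omega) (List.ofFn a)
    exact this.imp (fun h => by simpa using h)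
  have hperm : l.Perm (List.ofFn a) := List.mergeSort_perm _ _
  have hcount : ∀ v : ℕ, l.countP (· ≤ v) = (Finset.univ.filter fun k => a k ≤ v).card := by
    intro v
    rw [hperm.countP_eq, PF.countP_ofFn]
    congr 1
    ext k
    simp
  constructor
  · rintro ⟨h1, h2⟩
    refine ⟨h1, fun j hj => ?_⟩
    rcases Nat.eq_zero_or_pos j with rfl | hjpos
    · omega
    have hi : j - 1 < m := by omega
    have h3 := h2 ⟨j - 1, hi⟩
    simp only [Fin.val_mk] at h3
    rw [getElem!_pos l (j-1) (by omega)] at h3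
    have h4 : l[j-1]'(by omega) ≤ j := by omega
    have h5 := (PF.sorted_getElem_le_iff (v := j) hsorted (by omega : j - 1 < l.length)).mp h4
    rw [hcount] at h5
    omega
  · rintro ⟨h1, h2⟩
    refine ⟨h1, fun i => ?_⟩
    rw [getElem!_pos l i.val (by omega)]
    have hc := h2 (i.val + 1) (by omega)
    rw [← hcount] at hc
    exact (PF.sorted_getElem_le_iff (v := i.val + 1) hsorted (by omega)).mpr hc

/-! ### The circular setup (Pollak's argument) -/

def ParkZ (m : ℕ) (f : Fin m → ZMod (m+1)) : Prop :=
  ∀ j : ℕ, j ≤ m → j ≤ (Finset.univ.filter fun k => (f k).val < j).card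

def PF.cnt (m : ℕ) (f : Fin m → ZMod (m+1)) (i : ℕ) : ℕ :=
  (Finset.univ.filter fun k => (f k).val = i).card

noncomputable def PF.P (m : ℕ) (f : Fin m → ZMod (m+1)) (j : ℕ) : ℤ :=
  ∑ i ∈ Finset.range j, ((PF.cnt m f (i % (m+1)) : ℤ) - 1)

namespace PF
variable (m : ℕ) (f : Fin m → ZMod (m+1))

theorem cnt_total : ∑ i ∈ Finset.range (m+1), cnt m f i = m := by
  classical
  have h := Finset.card_eq_sum_card_fiberwise (s := Finset.univ)
    (t := Finset.range (m+1)) (f := fun k => (f k).val)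
    (fun k _ => Finset.mem_range.mpr (ZMod.val_lt _))
  simpa [cnt, Finset.card_univ] using h.symm

theorem P_succ (j : ℕ) : P m f (j + 1) = P m f j + ((cnt m f (j % (m+1)) : ℤ) - 1) := by
  simp only [P, Finset.sum_range_succ]

theorem P_period (j : ℕ) : P m f (j + (m+1)) = P m f j - 1 := by
  induction j with
  | zero =>
      have h0 : P m f (0 + (m+1)) = ∑ i ∈ Finset.range (m+1), ((cnt m f i : ℤ) - 1) := by
        simp only [P, Nat.zero_add]
        exact Finset.sum_congr rfl (fun i hi => by rw [Nat.mod_eq_of_lt (Finset.mem_range.mp hi)])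
      have h2 : ∑ i ∈ Finset.range (m+1), (cnt m f i : ℤ) = (m : ℤ) := by
        rw [← Nat.cast_sum, cnt_total]
      rw [h0, Finset.sum_sub_distrib, h2]
      simp [P]
  | succ j ih =>
      have e1 : j + 1 + (m+1) = (j + (m+1)) + 1 := by omega
      rw [e1, P_succ, Nat.add_mod_right, ih, P_succ]
      ring

theorem P_shift (s j : ℕ) :
    P m f (s + j) = P m f s + ∑ i ∈ Finset.range j, ((cnt m f ((s + i) % (m+1)) : ℤ) - 1) := by
  induction j with
  | zero => simp
  | succ j ih =>
      rw [show s + (j+1) = (s + j) + 1 from by omega, P_succ, ih, Finset.sum_range_succ, add_assoc]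

theorem val_add_eq_iff (x c : ZMod (m+1)) (i : ℕ) (hi : i < m+1) :
    (x + c).val = i ↔ x.val = ((-c).val + i) % (m+1) := by
  have key : ((-c).val + i) % (m+1) = (-c + (i : ZMod (m+1))).val := by
    rw [ZMod.val_add, ZMod.val_natCast, Nat.mod_eq_of_lt hi]
  rw [key]
  constructor
  · intro h
    have h1 : ((((x + c).val : ℕ)) : ZMod (m+1)) = x + c := ZMod.natCast_rightInverse _
    rw [h] at h1
    have hx : x = -c + (i : ZMod (m+1)) := by rw [h1]; ring
    rw [hx]
  · intro h
    have h1 : (((x.val : ℕ)) : ZMod (m+1)) = x := ZMod.natCast_rightInverse _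
    have h2 : ((((-c + (i : ZMod (m+1))).val : ℕ)) : ZMod (m+1)) = -c + (i : ZMod (m+1)) :=
      ZMod.natCast_rightInverse _
    have hx : x = -c + (i : ZMod (m+1)) := by rw [← h1, h, h2]
    rw [hx, show -c + (i : ZMod (m+1)) + c = (i : ZMod (m+1)) from by ring,
      ZMod.val_natCast, Nat.mod_eq_of_lt hi]

theorem shift_count (c : ZMod (m+1)) (j : ℕ) (hj : j ≤ m) :
    ((Finset.univ.filter fun k => (f k + c).val < j).card : ℤ)
      = P m f ((-c).val + j) - P m f ((-c).val) + j := by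
  classical
  have hcard : (Finset.univ.filter fun k => (f k + c).val < j).card
      = ∑ i ∈ Finset.range j, cnt m f (((-c).val + i) % (m+1)) := by
    have h := Finset.card_eq_sum_card_fiberwise
      (s := Finset.univ.filter fun k => (f k + c).val < j) (t := Finset.range j)
      (f := fun k => (f k + c).val)
      (fun k hk => Finset.mem_range.mpr (Finset.mem_filter.mp hk).2)
    rw [h]
    refine Finset.sum_congr rfl (fun i hi => ?_)
    congr 1
    ext k
    simp only [Finset.mem_filter, Finset.mem_univ, true_and, cnt]
    have hij : i < j := Finset.mem_range.mp hi
    rw [val_add_eq_iff m (f k) c i (by omega)]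
    constructor
    · rintro ⟨-, h2⟩; exact h2
    · intro h2
      refine ⟨?_, h2⟩
      rw [← val_add_eq_iff m (f k) c i (by omega)] at h2
      omega
  rw [hcard, Nat.cast_sum]
  rw [P_shift m f ((-c).val) j, Finset.sum_sub_distrib, Finset.sum_const, Finset.card_range,
    nsmul_eq_mul, mul_one]
  ring
end PF

theorem PF.parkZ_shift_iff (m : ℕ) (f : Fin m → ZMod (m+1)) (c : ZMod (m+1)) :
    ParkZ m (fun k => f k + c) ↔
      ∀ j : ℕ, j ≤ m → P m f ((-c).val) ≤ P m f ((-c).val + j) := by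
  unfold ParkZ
  constructor
  · intro h j hj
    have h1 := h j hj
    simp only at h1
    have h2 := shift_count m f c j hj
    omega
  · intro h j hj
    have h1 := h j hj
    have h2 := shift_count m f c j hj
    simp only
    omega

theorem PF.exists_unique_good (m : ℕ) (f : Fin m → ZMod (m+1)) :
    ∃! s : ℕ, s < m + 1 ∧ ∀ j : ℕ, j ≤ m → P m f s ≤ P m f (s + j) := by
  have hTne : (Finset.Ico (m+1) (2*(m+1))).Nonempty := ⟨m+1, Finset.mem_Ico.mpr ⟨le_rfl, by omega⟩⟩
  have hMne : ((Finset.Ico (m+1) (2*(m+1))).image (P m f)).Nonempty := hTne.image _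
  obtain ⟨M, hM⟩ : ∃ M, M = ((Finset.Ico (m+1) (2*(m+1))).image (P m f)).min' hMne := ⟨_, rfl⟩
  have hMle : ∀ t ∈ Finset.Ico (m+1) (2*(m+1)), M ≤ P m f t := fun t ht =>
    hM ▸ Finset.min'_le _ _ (Finset.mem_image_of_mem _ ht)
  obtain ⟨b, hbT, hbM⟩ : ∃ b ∈ Finset.Ico (m+1) (2*(m+1)), P m f b = M := by
    have := Finset.min'_mem _ hMne
    rw [← hM] at this
    exact Finset.mem_image.mp this
  have hQ : ∃ s, m + 1 ≤ s ∧ P m f s = M := ⟨b, (Finset.mem_Ico.mp hbT).1, hbM⟩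
  obtain ⟨s, hs⟩ : ∃ s, s = Nat.find hQ := ⟨_, rfl⟩
  have hsQ : m + 1 ≤ s ∧ P m f s = M := hs ▸ Nat.find_spec hQ
  have hsb : s ≤ b := hs ▸ Nat.find_min' hQ ⟨(Finset.mem_Ico.mp hbT).1, hbM⟩
  have hsbounds : m + 1 ≤ s ∧ s < 2*(m+1) := ⟨hsQ.1, lt_of_le_of_lt hsb (Finset.mem_Ico.mp hbT).2⟩
  have hsmin : ∀ t ∈ Finset.Ico (m+1) (2*(m+1)), P m f s ≤ P m f t := fun t ht =>
    hsQ.2 ▸ hMle t ht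
  have hleast : ∀ t ∈ Finset.Ico (m+1) (2*(m+1)), t < s → P m f s < P m f t := by
    intro t ht hts
    rcases lt_or_ge (P m f s) (P m f t) with h | h
    · exact h
    have htM : P m f t = M := le_antisymm (hsQ.2 ▸ h) (hMle t ht)
    have hlt2 : t < Nat.find hQ := by omega
    exact absurd ⟨(Finset.mem_Ico.mp ht).1, htM⟩ (Nat.find_min hQ hlt2)
  have hgood : ∀ j : ℕ, j ≤ m → P m f s ≤ P m f (s + j) := by
    intro j hj
    rcases lt_or_ge (s + j) (2*(m+1)) with h | h
    · exact hsmin _ (Finset.mem_Ico.mpr ⟨by omega, h⟩)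
    · have ht : s + j - (m+1) ∈ Finset.Ico (m+1) (2*(m+1)) := Finset.mem_Ico.mpr ⟨by omega, by omega⟩
      have hlt : s + j - (m+1) < s := by omega
      have h1 := hleast _ ht hlt
      have h2 : P m f (s + j) = P m f (s + j - (m+1)) - 1 := by
        have := P_period m f (s + j - (m+1))
        rw [show s + j - (m+1) + (m+1) = s + j from by omega] at this
        omega
      omega
  have hg' : ∀ j : ℕ, j ≤ m → P m f (s - (m+1)) ≤ P m f (s - (m+1) + j) := by
    intro j hj
    have e1 : P m f (s - (m+1) + j) = P m f (s + j) + 1 := by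
      have := P_period m f (s - (m+1) + j)
      rw [show s - (m+1) + j + (m+1) = s + j from by omega] at this
      omega
    have e2 : P m f (s - (m+1)) = P m f s + 1 := by
      have := P_period m f (s - (m+1))
      rw [show s - (m+1) + (m+1) = s from by omega] at this
      omega
    have := hgood j hj
    omega
  have haux : ∀ s1 s2 : ℕ, s1 < m+1 → s2 < m+1 → s1 < s2 →
      (∀ j : ℕ, j ≤ m → P m f s1 ≤ P m f (s1 + j)) →
      (∀ j : ℕ, j ≤ m → P m f s2 ≤ P m f (s2 + j)) → False := by
    intro s1 s2 h1 h2 h12 hg1 hg2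
    have e1 := hg1 (s2 - s1) (by omega)
    rw [show s1 + (s2 - s1) = s2 from by omega] at e1
    have e2 := hg2 (s1 + (m+1) - s2) (by omega)
    rw [show s2 + (s1 + (m+1) - s2) = s1 + (m+1) from by omega, P_period] at e2
    omega
  refine ⟨s - (m+1), ⟨by omega, hg'⟩, ?_⟩
  intro t ⟨htlt, htgood⟩
  by_contra hne2
  have hs' : s - (m+1) < m+1 := by omega
  rcases lt_trichotomy t (s - (m+1)) with h | h | h
  · exact haux t (s - (m+1)) htlt hs' h htgood hg'
  · exact hne2 h
  · exact haux (s - (m+1)) t hs' htlt h hg' htgood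

theorem PF.exists_unique_shift (m : ℕ) (f : Fin m → ZMod (m+1)) :
    ∃! c : ZMod (m+1), ParkZ m (fun k => f k + c) := by
  obtain ⟨s, ⟨hs, hgood⟩, huniq⟩ := exists_unique_good m f
  refine ⟨-(s : ZMod (m+1)), ?_, ?_⟩
  · show ParkZ m (fun k => f k + -(s : ZMod (m+1)))
    rw [parkZ_shift_iff]
    have hv : (-(-(s : ZMod (m+1)))).val = s := by
      rw [neg_neg, ZMod.val_natCast, Nat.mod_eq_of_lt hs]
    rw [hv]
    exact hgood
  · intro c hc
    rw [parkZ_shift_iff] at hc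
    have h1 := huniq ((-c).val) ⟨ZMod.val_lt _, hc⟩
    have h2 : (((-c).val : ℕ) : ZMod (m+1)) = -c := ZMod.natCast_rightInverse _
    rw [h1] at h2
    rw [h2, neg_neg]

theorem PF.card_parkZ_mul (m : ℕ) :
    Nat.card {g : Fin m → ZMod (m+1) // ParkZ m g} * (m+1) = (m+1) ^ m := by
  classical
  have hC1 : ∀ f : Fin m → ZMod (m+1),
      ParkZ m (fun k => f k + (exists_unique_shift m f).choose) :=
    fun f => (exists_unique_shift m f).choose_spec.1
  have hC2 : ∀ (f : Fin m → ZMod (m+1)) (c : ZMod (m+1)),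
      ParkZ m (fun k => f k + c) → c = (exists_unique_shift m f).choose :=
    fun f c h => (exists_unique_shift m f).choose_spec.2 c h
  have e : (Fin m → ZMod (m+1)) ≃ {g : Fin m → ZMod (m+1) // ParkZ m g} × ZMod (m+1) := by
    refine ⟨fun f => (⟨fun k => f k + (exists_unique_shift m f).choose, hC1 f⟩,
      (exists_unique_shift m f).choose),
      fun p => fun k => p.1.1 k - p.2, ?_, ?_⟩
    · intro f
      funext k
      simp
    · rintro ⟨⟨g, hg⟩, d⟩
      have hgd : (fun k => (g k - d) + d) = g := by funext k; ring
      have hd : d = (exists_unique_shift m (fun k => g k - d)).choose := by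
        apply hC2
        rw [hgd]
        exact hg
      simp only [Prod.mk.injEq, Subtype.mk.injEq]
      constructor
      · funext k
        rw [← hd]
        ring
      · exact hd.symm
  have h1 : Nat.card (Fin m → ZMod (m+1)) = (m+1) ^ m := by
    rw [Nat.card_eq_fintype_card]
    simp [ZMod.card]
  rw [Nat.card_congr e, Nat.card_prod, Nat.card_eq_fintype_card (α := ZMod (m+1))] at h1
  simpa [ZMod.card] using h1

theorem PF.card_PF_eq (m : ℕ) :
    Nat.card {a : Fin m → ℕ // IsParkingFunction m a}
      = Nat.card {g : Fin m → ZMod (m+1) // ParkZ m g} := by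
  classical
  have toPark : ∀ a : Fin m → ℕ, IsParkingFunction m a →
      ParkZ m (fun k => ((a k - 1 : ℕ) : ZMod (m+1))) := by
    intro a ha
    rw [isPF_iff] at ha
    obtain ⟨h1, h2⟩ := ha
    intro j hj
    refine le_trans (h2 j hj) (le_of_eq ?_)
    congr 1
    ext k
    simp only [Finset.mem_filter, Finset.mem_univ, true_and]
    rw [ZMod.val_cast_of_lt (by have := h1 k; omega : a k - 1 < m + 1)]
    have := h1 k
    omega
  have fromPark : ∀ g : Fin m → ZMod (m+1), ParkZ m g →
      IsParkingFunction m (fun k => (g k).val + 1) := by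
    intro g hg
    have hval : ∀ k, (g k).val < m := by
      intro k
      have h := hg m le_rfl
      have huniv : (Finset.univ.filter fun k => (g k).val < m) = Finset.univ := by
        apply Finset.eq_univ_of_card
        have hle := Finset.card_filter_le Finset.univ (fun k : Fin m => (g k).val < m)
        simp only [Finset.card_univ, Fintype.card_fin] at hle ⊢
        omega
      have hk : k ∈ Finset.univ.filter fun k => (g k).val < m := by
        rw [huniv]; exact Finset.mem_univ k
      exact (Finset.mem_filter.mp hk).2
    rw [isPF_iff]
    refine ⟨fun k => ⟨by omega, by have := hval k; omega⟩, fun j hj => ?_⟩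
    exact le_trans (hg j hj) (le_of_eq rfl)
  apply Nat.card_congr
  refine ⟨fun a => ⟨fun k => ((a.1 k - 1 : ℕ) : ZMod (m+1)), toPark a.1 a.2⟩,
    fun g => ⟨fun k => (g.1 k).val + 1, fromPark g.1 g.2⟩, ?_, ?_⟩
  · rintro ⟨a, ha⟩
    apply Subtype.ext
    funext k
    simp only
    rw [ZMod.val_cast_of_lt (by have := ha.1 k; omega : a k - 1 < m + 1)]
    have := ha.1 k
    omega
  · rintro ⟨g, hg⟩
    apply Subtype.ext
    funext k
    simp only [Nat.add_sub_cancel]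
    exact ZMod.natCast_rightInverse _

/-- The number of parking functions of length `n-1` is `n^(n-2)`. -/
theorem card_parking_functions (n : ℕ) (hn : 1 ≤ n) :
    Nat.card {a : Fin (n - 1) → ℕ // IsParkingFunction (n - 1) a} = n ^ (n - 2) := by
  obtain ⟨m, rfl⟩ : ∃ m, n = m + 1 := ⟨n - 1, by omega⟩
  show Nat.card {a : Fin m → ℕ // IsParkingFunction m a} = (m+1) ^ (m+1-2)
  have h1 := PF.card_parkZ_mul m
  rw [← PF.card_PF_eq m] at h1
  have h2 : (m+1) ^ m = (m+1) ^ (m + 1 - 2) * (m+1) := by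
    rcases m with _ | m
    · simp
    · rw [show m + 1 + 1 - 2 = m from by omega, pow_succ]
  rw [h2] at h1
  exact Nat.eq_of_mul_eq_mul_right (by omega) h1
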